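/- Let 𝔽 be ℝ or ℂ, let n ≥ 2 and K ≥ 2, and let 𝒫 be a probability measure on the K-fold product of the space of n×n matrices over 𝔽 that is absolutely continuous with respect to the product Lebesgue measure. Then the set of tuples 𝒜 = (A_1,…,A_K) that possess a common nontrivial invariant subspace has 𝒫-measure zero. -/

import Mathlib

open Matrix MeasureTheory

section Aux

variable {𝕜 : Type*} [RCLike 𝕜]

/-! ### Null sets of polynomials -/

section PolyNull

variable [MeasurableSpace 𝕜] [BorelSpace 𝕜]

lemma measurable_mv_eval {ι : Type*} [Fintype ι] (p : MvPolynomial ι 𝕜) :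
    Measurable fun x : ι → 𝕜 => MvPolynomial.eval x p := by
  induction p using MvPolynomial.induction_on with
  | C a => simpa using measurable_const
  | add p q hp hq => simp only [map_add]; exact hp.add hq
  | mul_X p i hp => simp only [map_mul, MvPolynomial.eval_X]; exact hp.mul (measurable_pi_apply i)

lemma exists_eval_ne {ι : Type*} {p : MvPolynomial ι 𝕜} (hp : p ≠ 0) :
    ∃ x : ι → 𝕜, MvPolynomial.eval x p ≠ 0 := by
  by_contra h
  push_neg at h
  exact hp (MvPolynomial.funext fun x => by simpa using h x)

lemma poly_null (ν : Measure 𝕜) [NullSingletonClass ν] {p : Polynomial 𝕜} (hp : p ≠ 0) :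
    ν {x | Polynomial.eval x p = 0} = 0 :=
  (Polynomial.finite_setOf_isRoot hp).measure_zero ν

lemma mv_poly_null_fin (ν : Measure 𝕜) [SigmaFinite ν] [NullSingletonClass ν] :
    ∀ (d : ℕ) (p : MvPolynomial (Fin d) 𝕜), p ≠ 0 →
      Measure.pi (fun _ : Fin d => ν) {x | MvPolynomial.eval x p = 0} = 0 := by
  intro d
  induction d with
  | zero =>
    intro p hp
    obtain ⟨x₀, hx₀⟩ := exists_eval_ne hp
    have : {x : Fin 0 → 𝕜 | MvPolynomial.eval x p = 0} = ∅ := by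
      ext x
      simp only [Set.mem_setOf_eq, Set.mem_empty_iff_false, iff_false]
      rwa [Subsingleton.elim x x₀]
    simp [this]
  | succ d ih =>
    intro p hp
    set q := MvPolynomial.finSuccEquiv 𝕜 d p with hqdef
    have hq0 : q ≠ 0 := by
      intro h
      apply hp
      have := congrArg (MvPolynomial.finSuccEquiv 𝕜 d).symm h
      simpa [hqdef] using this
    have hc : q.leadingCoeff ≠ 0 := Polynomial.leadingCoeff_ne_zero.2 hq0
    -- the set in product form
    set s : Set (𝕜 × (Fin d → 𝕜)) :=
      {yt | MvPolynomial.eval (Fin.cons yt.1 yt.2) p = 0} with hsdef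
    have hcons : Measurable fun yt : 𝕜 × (Fin d → 𝕜) => (Fin.cons yt.1 yt.2 : Fin (d+1) → 𝕜) := by
      refine measurable_pi_iff.2 fun j => ?_
      refine Fin.cases ?_ (fun i => ?_) j
      · simpa using measurable_fst
      · simp only [Fin.cons_succ]; exact (measurable_pi_apply i).comp measurable_snd
    have hsm : MeasurableSet s :=
      ((measurable_mv_eval p).comp hcons) (MeasurableSet.singleton 0)
    have hpre : {x : Fin (d+1) → 𝕜 | MvPolynomial.eval x p = 0} =
        (MeasurableEquiv.piFinSuccAbove (fun _ : Fin (d+1) => 𝕜) 0) ⁻¹' s := by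
      ext x
      have hx : (Fin.cons ((Fin.insertNthEquiv (fun _ : Fin (d+1) => 𝕜) 0).symm x).1
          ((Fin.insertNthEquiv (fun _ : Fin (d+1) => 𝕜) 0).symm x).2 : Fin (d+1) → 𝕜) = x := by
        rw [Fin.insertNthEquiv_zero]
        exact (Fin.consEquiv fun _ : Fin (d+1) => 𝕜).apply_symm_apply x
      simp only [Set.mem_preimage, MeasurableEquiv.piFinSuccAbove_apply, hsdef,
        Set.mem_setOf_eq]
      rw [hx]
    have hmp := measurePreserving_piFinSuccAbove (fun _ : Fin (d+1) => ν) 0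
    rw [hpre, hmp.measure_preimage hsm.nullMeasurableSet]
    -- now a product measure computation
    rw [← Measure.prod_swap, Measure.map_apply measurable_swap hsm]
    have hnull : ∀ᵐ t ∂(Measure.pi fun _ : Fin d => ν),
        MvPolynomial.eval t q.leadingCoeff ≠ 0 := by
      have h0 := ih q.leadingCoeff hc
      rw [measure_eq_zero_iff_ae_notMem] at h0
      simpa using h0
    rw [Measure.measure_prod_null (hsm.preimage measurable_swap)]
    filter_upwards [hnull] with t ht
    have hmap : q.map (MvPolynomial.eval t) ≠ 0 := by
      intro h
      apply ht
      have h1 : (q.map (MvPolynomial.eval t)).coeff q.natDegree = 0 := by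
        rw [h, Polynomial.coeff_zero]
      rw [Polynomial.coeff_map] at h1
      exact h1
    have hset : (Prod.mk t ⁻¹' (Prod.swap ⁻¹' s)) =
        {y : 𝕜 | Polynomial.eval y (q.map (MvPolynomial.eval t)) = 0} := by
      ext y
      simp only [Set.mem_preimage, Prod.swap_prod_mk, hsdef, Set.mem_setOf_eq]
      rw [MvPolynomial.eval_eq_eval_mv_eval']
    simp only [Pi.zero_apply]
    rw [hset]
    exact poly_null ν hmap
  
lemma mv_poly_null {ι : Type*} [Fintype ι] (ν : Measure 𝕜) [SigmaFinite ν] [NullSingletonClass ν]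
    {p : MvPolynomial ι 𝕜} (hp : p ≠ 0) :
    Measure.pi (fun _ : ι => ν) {x | MvPolynomial.eval x p = 0} = 0 := by
  classical
  set d := Fintype.card ι with hd
  set e : ι ≃ Fin d := Fintype.equivFin ι with he
  set p' : MvPolynomial (Fin d) 𝕜 := MvPolynomial.rename e p with hp'def
  have hp'0 : p' ≠ 0 := by
    intro h
    refine hp (MvPolynomial.rename_injective (R := 𝕜) e e.injective ?_)
    rw [← hp'def, h, map_zero]
  have hmp := measurePreserving_piCongrLeft (fun _ : ι => ν) e.symm
  have hmeas : MeasurableSet {x : ι → 𝕜 | MvPolynomial.eval x p = 0} :=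
    (measurable_mv_eval p) (MeasurableSet.singleton 0)
  rw [← hmp.measure_preimage hmeas.nullMeasurableSet]
  have hpre : (⇑(MeasurableEquiv.piCongrLeft (fun _ : ι => 𝕜) e.symm)) ⁻¹'
      {x : ι → 𝕜 | MvPolynomial.eval x p = 0}
      = {y : Fin d → 𝕜 | MvPolynomial.eval y p' = 0} := by
    ext y
    have hco : ((Equiv.piCongrLeft (fun _ : ι => 𝕜) e.symm) y) = fun i => y (e i) := by
      funext i
      have h2 := Equiv.piCongrLeft_apply_apply (fun _ : ι => 𝕜) e.symm y (e i)
      simpa using h2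
    simp only [Set.mem_preimage, Set.mem_setOf_eq, MeasurableEquiv.coe_piCongrLeft, hco,
      hp'def, MvPolynomial.eval_rename]
    rfl
  rw [hpre]
  exact mv_poly_null_fin ν d p' hp'0

end PolyNull

end Aux

section Words

variable {n : ℕ}

/-- The matrix of "words" `A^i * B^j`, with rows indexed by the word `(i, j)` and columns
indexed by matrix positions. -/
def wordMat {R : Type*} [CommRing R] (A B : Matrix (Fin n) (Fin n) R) :
    Matrix (Fin n × Fin n) (Fin n × Fin n) R :=
  Matrix.of fun ij rs => (A ^ (ij.1 : ℕ) * B ^ (ij.2 : ℕ)) rs.1 rs.2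

lemma wordMat_map {R S : Type*} [CommRing R] [CommRing S] (f : R →+* S)
    (A B : Matrix (Fin n) (Fin n) R) :
    (wordMat A B).map f = wordMat (A.map f) (B.map f) := by
  ext ⟨i, j⟩ ⟨r, s⟩
  have h1 : (A.map f) ^ (i : ℕ) * (B.map f) ^ (j : ℕ)
      = (A ^ (i : ℕ) * B ^ (j : ℕ)).map f := by
    simp only [← RingHom.mapMatrix_apply, ← map_pow, ← _root_.map_mul]
  simp [wordMat, h1]

lemma det_wordMat_eq_zero {𝕜 : Type*} [RCLike 𝕜] {Y : Submodule 𝕜 (Fin n → 𝕜)}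
    (hb : Y ≠ ⊥) (ht : Y ≠ ⊤) {A B : Matrix (Fin n) (Fin n) 𝕜}
    (hA : ∀ x ∈ Y, A.mulVec x ∈ Y) (hB : ∀ x ∈ Y, B.mulVec x ∈ Y) :
    (wordMat A B).det = 0 := by
  classical
  by_contra hdet
  obtain ⟨y, hyY, hy0⟩ := Submodule.exists_mem_ne_zero_of_ne_bot hb
  obtain ⟨z, hz⟩ : ∃ z, z ∉ Y := by
    by_contra h
    push_neg at h
    exact ht (Submodule.eq_top_iff'.2 h)
  obtain ⟨j₀, hj₀⟩ : ∃ j, y j ≠ 0 := Function.ne_iff.1 hy0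
  set M : Matrix (Fin n) (Fin n) 𝕜 :=
    Matrix.of (fun r s => z r * (if s = j₀ then (y j₀)⁻¹ else 0)) with hM
  have hMy : M.mulVec y = z := by
    funext r
    simp only [Matrix.mulVec, dotProduct, hM, Matrix.of_apply]
    rw [Finset.sum_eq_single j₀]
    · rw [if_pos rfl]
      field_simp
    · intro b _ hb'
      rw [if_neg hb', mul_zero, zero_mul]
    · intro hmem; exact absurd (Finset.mem_univ _) hmem
  have hpow : ∀ (C : Matrix (Fin n) (Fin n) 𝕜), (∀ x ∈ Y, C.mulVec x ∈ Y) →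
      ∀ (i : ℕ), ∀ x ∈ Y, (C ^ i).mulVec x ∈ Y := by
    intro C hC i
    induction i with
    | zero => intro x hx; simpa [Matrix.one_mulVec] using hx
    | succ i ih =>
      intro x hx
      rw [pow_succ, ← Matrix.mulVec_mulVec]
      exact ih _ (hC x hx)
  have hword : ∀ ij : Fin n × Fin n,
      ((A ^ (ij.1 : ℕ) * B ^ (ij.2 : ℕ)).mulVec y) ∈ Y := by
    rintro ⟨i, j⟩
    rw [← Matrix.mulVec_mulVec]
    exact hpow A hA _ _ (hpow B hB _ _ hyY)
  have hu : IsUnit (wordMat A B).det := isUnit_iff_ne_zero.2 hdet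
  set v : Fin n × Fin n → 𝕜 := fun rs => M rs.1 rs.2 with hv
  set u := Matrix.vecMul v (wordMat A B)⁻¹ with hudef
  have huW : Matrix.vecMul u (wordMat A B) = v := by
    rw [hudef, Matrix.vecMul_vecMul, Matrix.nonsing_inv_mul _ hu, Matrix.vecMul_one]
  have hMsum : ∀ r s, M r s = ∑ ij : Fin n × Fin n,
      u ij * (A ^ (ij.1 : ℕ) * B ^ (ij.2 : ℕ)) r s := by
    intro r s
    have h2 := congrFun huW (r, s)
    simp only [Matrix.vecMul, dotProduct, wordMat, Matrix.of_apply, hv] at h2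
    exact h2.symm
  have hzY : z ∈ Y := by
    rw [← hMy]
    have hexp : M.mulVec y = ∑ ij : Fin n × Fin n,
        u ij • ((A ^ (ij.1 : ℕ) * B ^ (ij.2 : ℕ)).mulVec y) := by
      funext r
      have h1 : (M.mulVec y) r = ∑ s, M r s * y s := rfl
      have h2 : ∀ s, M r s * y s = ∑ ij : Fin n × Fin n,
          u ij * ((A ^ (ij.1 : ℕ) * B ^ (ij.2 : ℕ)) r s * y s) := by
        intro s
        rw [hMsum r s, Finset.sum_mul]
        exact Finset.sum_congr rfl fun ij _ => mul_assoc _ _ _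
      rw [h1, Finset.sum_congr rfl fun s _ => h2 s, Finset.sum_comm]
      rw [Finset.sum_apply]
      refine Finset.sum_congr rfl fun ij _ => ?_
      rw [Pi.smul_apply, smul_eq_mul, ← Finset.mul_sum]
      rfl
    rw [hexp]
    exact Submodule.sum_mem _ fun ij _ => Submodule.smul_mem _ _ (hword ij)
  exact hz hzY

open Fin.NatCast in
lemma exists_det_wordMat_ne_zero {𝕜 : Type*} [RCLike 𝕜] (hn : 2 ≤ n) :
    ∃ A B : Matrix (Fin n) (Fin n) 𝕜, (wordMat A B).det ≠ 0 := by
  classical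
  obtain ⟨m, rfl⟩ : ∃ m, n = m + 1 := ⟨n - 1, by omega⟩
  set c : Fin (m+1) → 𝕜 := fun r => ((r : ℕ) : 𝕜) with hc
  have hcinj : Function.Injective c := by
    intro a b hab
    exact Fin.ext (Nat.cast_injective hab)
  set D : Matrix (Fin (m+1)) (Fin (m+1)) 𝕜 := Matrix.diagonal c with hD
  set C : Matrix (Fin (m+1)) (Fin (m+1)) 𝕜 :=
    Matrix.of (fun r s => if s = r + 1 then 1 else 0) with hC
  refine ⟨D, C, ?_⟩
  have hCpow : ∀ (j : ℕ) (r s : Fin (m+1)),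
      (C ^ j) r s = if s = r + (j : Fin (m+1)) then 1 else 0 := by
    intro j
    induction j with
    | zero => intro r s; simp [Matrix.one_apply, eq_comm]
    | succ j ih =>
      intro r s
      rw [pow_succ, Matrix.mul_apply]
      rw [Finset.sum_congr rfl fun t _ => by rw [ih r t]]
      rw [Finset.sum_eq_single (r + (j : Fin (m+1)))]
      · rw [if_pos rfl, one_mul, hC, Matrix.of_apply]
        have hcast : (((j : ℕ) + 1 : ℕ) : Fin (m+1)) = ((j : ℕ) : Fin (m+1)) + 1 := by
          push_cast
          ring
        rw [hcast, ← add_assoc]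
      · intro b _ hb
        rw [if_neg hb, zero_mul]
      · intro hmem; exact absurd (Finset.mem_univ _) hmem
  have hW : ∀ i j r s : Fin (m+1), wordMat D C (i, j) (r, s)
      = (c r ^ (i : ℕ)) * (if s = r + j then 1 else 0) := by
    intro i j r s
    show (D ^ (i : ℕ) * C ^ (j : ℕ)) r s = _
    rw [Matrix.mul_apply]
    rw [Finset.sum_eq_single r]
    · rw [hD, Matrix.diagonal_pow, Matrix.diagonal_apply_eq, hCpow]
      rw [Fin.cast_val_eq_self, Pi.pow_apply]
    · intro b _ hb
      rw [hD, Matrix.diagonal_pow, Matrix.diagonal_apply_ne' _ hb, zero_mul]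
    · intro hmem; exact absurd (Finset.mem_univ _) hmem
  -- identify `wordMat D C` with a permuted Kronecker product
  set V : Matrix (Fin (m+1)) (Fin (m+1)) 𝕜 := (Matrix.vandermonde c)ᵀ with hV
  set X : Matrix (Fin (m+1) × Fin (m+1)) (Fin (m+1) × Fin (m+1)) 𝕜 :=
    Matrix.kroneckerMap (· * ·) V (1 : Matrix (Fin (m+1)) (Fin (m+1)) 𝕜) with hX
  set e : (Fin (m+1) × Fin (m+1)) ≃ (Fin (m+1) × Fin (m+1)) :=
    Equiv.prodShear (Equiv.refl _) (fun r => Equiv.subRight r) with he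
  have hWX : wordMat D C = X.submatrix id e := by
    ext ⟨i, j⟩ ⟨r, s⟩
    rw [hW i j r s]
    have he1 : e (r, s) = (r, s - r) := rfl
    rw [Matrix.submatrix_apply, id_eq, he1, hX]
    simp only [Matrix.kroneckerMap_apply, hV, Matrix.transpose_apply, Matrix.vandermonde,
      Matrix.one_apply, Matrix.of_apply]
    have hiff : (s = r + j) ↔ (j = s - r) := by
      constructor
      · intro h; subst h; simp
      · intro h; subst h; simp
    rw [if_congr hiff rfl rfl]
  have hdetV : V.det ≠ 0 := by
    rw [hV, Matrix.det_transpose, Matrix.det_vandermonde]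
    refine Finset.prod_ne_zero_iff.2 fun i _ => Finset.prod_ne_zero_iff.2 fun j hj => ?_
    rw [Finset.mem_Ioi] at hj
    exact sub_ne_zero.2 fun hcc => (ne_of_gt hj) (hcinj hcc.symm).symm
  have hdetX : X.det ≠ 0 := by
    rw [hX, Matrix.det_kronecker, Matrix.det_one, one_pow, mul_one]
    exact pow_ne_zero _ hdetV
  rw [hWX, Matrix.det_permute' e X]
  refine mul_ne_zero ?_ hdetX
  have : ((Equiv.Perm.sign e : ℤ) : 𝕜) ≠ 0 := by
    rw [Int.cast_ne_zero]
    exact Units.ne_zero _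
  exact_mod_cast this

end Words

/-- if `𝒫` is a probability measure on `K`-tuples of `n × n` matrices
over `𝔽` that is absolutely continuous with respect to the product Lebesgue
(additive Haar) measure, then the set of tuples possessing a common nontrivial
invariant subspace has `𝒫`-measure zero. -/
theorem prob_common_invariant_subspace_eq_zero
    {𝕜 : Type*} [RCLike 𝕜] {n K : ℕ} (hn : 2 ≤ n) (hK : 2 ≤ K)
    [MeasurableSpace (Matrix (Fin n) (Fin n) 𝕜)]
    [BorelSpace (Matrix (Fin n) (Fin n) 𝕜)]
    (μ : Measure (Matrix (Fin n) (Fin n) 𝕜)) [μ.IsAddHaarMeasure] [SigmaFinite μ]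
    (P : Measure (Fin K → Matrix (Fin n) (Fin n) 𝕜)) [IsProbabilityMeasure P]
    (hP : P ≪ Measure.pi fun _ : Fin K => μ) :
    P {A : Fin K → Matrix (Fin n) (Fin n) 𝕜 |
        ∃ Y : Submodule 𝕜 (Fin n → 𝕜), Y ≠ ⊥ ∧ Y ≠ ⊤ ∧
          ∀ k, ∀ x ∈ Y, (A k).mulVec x ∈ Y} = 0 := by
  classical
  obtain ⟨K', rfl⟩ : ∃ K', K = K' + 2 := ⟨K - 2, by omega⟩
  letI : MeasurableSpace 𝕜 := borel 𝕜
  haveI : BorelSpace 𝕜 := ⟨rfl⟩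
  haveI : ProperSpace 𝕜 := FiniteDimensional.proper_rclike 𝕜 𝕜
  set ν : Measure 𝕜 := (Module.finBasis ℝ 𝕜).addHaar with hν
  haveI : SigmaFinite ν := inferInstance
  haveI : NullSingletonClass ν := inferInstance
  -- generic matrices and the generic word polynomial
  set G : Fin (K' + 2) → Matrix (Fin n) (Fin n) (MvPolynomial (Fin (K' + 2) × Fin n × Fin n) 𝕜) :=
    fun k => Matrix.of fun i j => MvPolynomial.X (k, i, j) with hG
  set p : MvPolynomial (Fin (K' + 2) × Fin n × Fin n) 𝕜 := (wordMat (G 0) (G 1)).det with hp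
  set f : (Fin (K' + 2) → Matrix (Fin n) (Fin n) 𝕜) → 𝕜 :=
    fun 𝒜 => (wordMat (𝒜 0) (𝒜 1)).det with hf
  -- the flattening linear equivalence
  let Φ : ((Fin (K' + 2) × Fin n × Fin n) → 𝕜) ≃ₗ[𝕜] (Fin (K' + 2) → Matrix (Fin n) (Fin n) 𝕜) :=
    (LinearEquiv.curry 𝕜 𝕜 (Fin (K' + 2)) (Fin n × Fin n)).trans
      (LinearEquiv.piCongrRight fun _ => LinearEquiv.curry 𝕜 𝕜 (Fin n) (Fin n))
  have hΦapp : ∀ (x : (Fin (K' + 2) × Fin n × Fin n) → 𝕜) (k : Fin (K' + 2)) (i j : Fin n),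
      Φ x k i j = x (k, i, j) := fun _ _ _ _ => rfl
  -- key algebraic identity
  have hkey : ∀ x : (Fin (K' + 2) × Fin n × Fin n) → 𝕜, MvPolynomial.eval x p = f (Φ x) := by
    intro x
    rw [hp, hf]
    have h1 : MvPolynomial.eval x ((wordMat (G 0) (G 1)).det)
        = ((wordMat (G 0) (G 1)).map (MvPolynomial.eval x)).det :=
      RingHom.map_det (MvPolynomial.eval x) _
    rw [h1, wordMat_map]
    have h2 : ∀ k : Fin (K' + 2), (G k).map (MvPolynomial.eval x) = Φ x k := by
      intro k
      ext i j
      simp only [hG, Matrix.map_apply, Matrix.of_apply, MvPolynomial.eval_X]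
      exact (hΦapp x k i j).symm
    rw [h2 0, h2 1]
  -- the polynomial is nonzero
  obtain ⟨Dm, Cm, hDC⟩ := exists_det_wordMat_ne_zero (𝕜 := 𝕜) hn
  have h1ne0 : (1 : Fin (K' + 2)) ≠ 0 := by
    intro h
    have h' := congrArg Fin.val h
    simp [Fin.val_one] at h'
  set tup : Fin (K' + 2) → Matrix (Fin n) (Fin n) 𝕜 := fun k => if k = 0 then Dm else Cm with htup
  have hpne : p ≠ 0 := by
    intro h0
    apply hDC
    have hk := hkey (Φ.symm tup)
    rw [h0, map_zero, Φ.apply_symm_apply, hf] at hk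
    have ht0 : tup 0 = Dm := by simp [htup]
    have ht1 : tup 1 = Cm := by simp [htup, h1ne0]
    simp only [] at hk
    rw [ht0, ht1] at hk
    exact hk.symm
  -- instances on the matrix and tuple spaces
  haveI : SecondCountableTopology (Matrix (Fin n) (Fin n) 𝕜) :=
    inferInstanceAs (SecondCountableTopology (Fin n → Fin n → 𝕜))
  haveI : LocallyCompactSpace (Matrix (Fin n) (Fin n) 𝕜) :=
    inferInstanceAs (LocallyCompactSpace (Fin n → Fin n → 𝕜))
  haveI : ContinuousSMul 𝕜 (Matrix (Fin n) (Fin n) 𝕜) :=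
    inferInstanceAs (ContinuousSMul 𝕜 (Fin n → Fin n → 𝕜))
  haveI : T2Space (Matrix (Fin n) (Fin n) 𝕜) :=
    inferInstanceAs (T2Space (Fin n → Fin n → 𝕜))
  haveI : IsTopologicalAddGroup (Matrix (Fin n) (Fin n) 𝕜) :=
    inferInstanceAs (IsTopologicalAddGroup (Fin n → Fin n → 𝕜))
  haveI : FiniteDimensional 𝕜 (Matrix (Fin n) (Fin n) 𝕜) :=
    inferInstanceAs (FiniteDimensional 𝕜 (Fin n → Fin n → 𝕜))
  -- measurability of Φ and f
  have hΦcont : Continuous (Φ : ((Fin (K' + 2) × Fin n × Fin n) → 𝕜) → _) :=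
    by have := LinearMap.continuous_of_finiteDimensional Φ.toLinearMap; exact this
  have hΦscont : Continuous (Φ.symm : (Fin (K' + 2) → Matrix (Fin n) (Fin n) 𝕜) → _) :=
    by have := LinearMap.continuous_of_finiteDimensional Φ.symm.toLinearMap; exact this
  have hΦmeas : Measurable (Φ : ((Fin (K' + 2) × Fin n × Fin n) → 𝕜) → _) := hΦcont.measurable
  have hfm : Measurable f := by
    have hfeq : f = (fun x : (Fin (K' + 2) × Fin n × Fin n) → 𝕜 => MvPolynomial.eval x p) ∘
        (Φ.symm : _ → _) := by
      funext A
      have := hkey (Φ.symm A)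
      rw [Φ.apply_symm_apply] at this
      exact this.symm
    rw [hfeq]
    exact (measurable_mv_eval p).comp hΦscont.measurable
  have hTm : MeasurableSet {A : Fin (K' + 2) → Matrix (Fin n) (Fin n) 𝕜 | f A = 0} :=
    hfm (MeasurableSet.singleton 0)
  -- the pushforward Haar measure on tuples
  set νE : Measure (Fin (K' + 2) → Matrix (Fin n) (Fin n) 𝕜) :=
    (Measure.pi fun _ : Fin (K' + 2) × Fin n × Fin n => ν).map Φ with hνE
  haveI : (Measure.pi fun _ : Fin (K' + 2) × Fin n × Fin n => ν).IsAddHaarMeasure := inferInstance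
  haveI : νE.IsAddHaarMeasure := Measure.MapLinearEquiv.isAddHaarMeasure _ Φ
  have hac : (Measure.pi fun _ : Fin (K' + 2) => μ) ≪ νE :=
    Measure.absolutelyContinuous_isAddHaarMeasure _ _
  -- the zero set of f is null
  have hνET : νE {A : Fin (K' + 2) → Matrix (Fin n) (Fin n) 𝕜 | f A = 0} = 0 := by
    rw [hνE, Measure.map_apply hΦmeas hTm]
    have hpre : (Φ : ((Fin (K' + 2) × Fin n × Fin n) → 𝕜) → _) ⁻¹'
        {A : Fin (K' + 2) → Matrix (Fin n) (Fin n) 𝕜 | f A = 0}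
        = {x : (Fin (K' + 2) × Fin n × Fin n) → 𝕜 | MvPolynomial.eval x p = 0} := by
      ext x
      simp only [Set.mem_preimage, Set.mem_setOf_eq, hkey]
    rw [hpre]
    exact mv_poly_null ν hpne
  -- conclude
  have hsub : {A : Fin (K' + 2) → Matrix (Fin n) (Fin n) 𝕜 |
      ∃ Y : Submodule 𝕜 (Fin n → 𝕜), Y ≠ ⊥ ∧ Y ≠ ⊤ ∧
        ∀ k, ∀ x ∈ Y, (A k).mulVec x ∈ Y} ⊆
      {A : Fin (K' + 2) → Matrix (Fin n) (Fin n) 𝕜 | f A = 0} := by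
    rintro A ⟨Y, hb, ht, hinv⟩
    exact det_wordMat_eq_zero hb ht (hinv 0) (hinv 1)
  exact hP (measure_mono_null hsub (hac hνET))
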